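/- arXiv:2402.07316 — 4 statements merged into one kernel-verified Lean document; each statement's English description precedes it below -/
import Mathlib

section
/- Suppose x₁,…,xₙ : ℝ → ℝ² are differentiable and solve the point vortex ODE x_i'(t) = Σ_{j≠i} m_j K(x_i(t), x_j(t)) on an interval I, with x_i(t) ≠ x_j(t) for i ≠ j on I. Then the weighted sum X(t) = Σ_i m_i x_i(t) is constant on I. -/
open scoped RealInnerProductSpace

noncomputable def perp (z : EuclideanSpace ℝ (Fin 2)) : EuclideanSpace ℝ (Fin 2) :=
  WithLp.toLp 2 (fun i : Fin 2 => if i = 0 then -(z 1) else z 0)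

noncomputable def K (x y : EuclideanSpace ℝ (Fin 2)) : EuclideanSpace ℝ (Fin 2) :=
  (‖x - y‖ ^ 2)⁻¹ • perp (x - y)

lemma perp_neg (z : EuclideanSpace ℝ (Fin 2)) : perp (-z) = -perp z := by
  ext i
  simp only [perp, PiLp.neg_apply, PiLp.toLp_apply]
  split <;> simp

lemma K_antisymm (x y : EuclideanSpace ℝ (Fin 2)) : K y x = -K x y := by
  have h : y - x = -(x - y) := by abel
  rw [K, K, h, perp_neg, norm_neg, smul_neg]

theorem center_of_mass_conserved (n : ℕ) (m : Fin n → ℝ) (hm : ∀ i, m i ≠ 0)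
    (x : Fin n → ℝ → EuclideanSpace ℝ (Fin 2)) (I : Set ℝ) (hI : I.OrdConnected)
    (hsep : ∀ t ∈ I, ∀ i j, i ≠ j → x i t ≠ x j t)
    (hode : ∀ t ∈ I, ∀ i, HasDerivWithinAt (x i)
      (∑ j ∈ Finset.univ.erase i, m j • K (x i t) (x j t)) I t) :
    ∀ s ∈ I, ∀ t ∈ I, ∑ i, m i • x i s = ∑ i, m i • x i t := by
  set F : ℝ → EuclideanSpace ℝ (Fin 2) := fun t => ∑ i, m i • x i t with hF
  have hderiv : ∀ t ∈ I, HasDerivWithinAt F 0 I t := by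
    intro t ht
    have h1 : HasDerivWithinAt F
        (∑ i, m i • ∑ j ∈ Finset.univ.erase i, m j • K (x i t) (x j t)) I t :=
      HasDerivWithinAt.fun_sum fun i _ => (hode t ht i).const_smul (m i)
    convert h1 using 1
    set a : Fin n → Fin n → EuclideanSpace ℝ (Fin 2) :=
      fun i j => m i • (m j • K (x i t) (x j t)) with ha
    have hS : (∑ i, m i • ∑ j ∈ Finset.univ.erase i, m j • K (x i t) (x j t))
        = ∑ i, ∑ j ∈ Finset.univ.erase i, a i j :=
      Finset.sum_congr rfl fun i _ => Finset.smul_sum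
    have hanti : ∀ i j, a i j = -a j i := by
      intro i j
      simp [ha, K_antisymm (x j t) (x i t), smul_comm (m i) (m j)]
    set S := ∑ i, ∑ j ∈ Finset.univ.erase i, a i j with hSdef
    have key : S = -S := by
      calc S = ∑ i, ∑ j ∈ Finset.univ.filter (· ≠ i), a i j := by
              simp [hSdef, Finset.filter_ne']
        _ = ∑ i : Fin n, ∑ j : Fin n, if j ≠ i then a i j else 0 := by
              simp [Finset.sum_filter]
        _ = ∑ j : Fin n, ∑ i : Fin n, if j ≠ i then a i j else 0 := Finset.sum_comm
        _ = ∑ j : Fin n, ∑ i : Fin n, -(if i ≠ j then a j i else 0) := by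
              refine Finset.sum_congr rfl fun j _ => Finset.sum_congr rfl fun i _ => ?_
              by_cases h : i = j
              · subst h; simp
              · rw [if_pos (Ne.symm h), if_pos h, hanti]
        _ = -∑ j : Fin n, ∑ i ∈ Finset.univ.filter (· ≠ j), a j i := by
              simp [Finset.sum_filter]
        _ = -S := by simp [hSdef, Finset.filter_ne']
    have : S = 0 := by
      have h2 : S + S = 0 := by nth_rewrite 1 [key]; abel
      have := congrArg (fun v => (2 : ℝ)⁻¹ • v) (two_smul ℝ S ▸ h2)
      simpa using this
    exact (hS.trans this).symm
  have hconv : Convex ℝ I := hI.convex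
  intro s hs t ht
  have hle := hconv.norm_image_sub_le_of_norm_hasDerivWithin_le
    (f' := fun _ => (0 : EuclideanSpace ℝ (Fin 2))) (C := 0)
    (fun u hu => hderiv u hu) (fun u _ => by simp) hs ht
  have : ‖F t - F s‖ ≤ 0 := by simpa using hle
  have : F t = F s := by
    have := le_antisymm this (norm_nonneg _)
    rwa [norm_sub_eq_zero_iff] at this
  exact this.symm
end

section
/- Suppose x₁,…,xₙ : ℝ → ℝ² are differentiable and solve the point vortex ODE x_i'(t) = Σ_{j≠i} m_j K(x_i(t), x_j(t)) on an interval I, with x_i(t) ≠ x_j(t) for i ≠ j on I. Then the second moment I(t) = Σ_i m_i |x_i(t)|² is constant on I. -/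
open scoped RealInnerProductSpace

lemma inner_perp_self (z : EuclideanSpace ℝ (Fin 2)) : ⟪z, perp z⟫ = 0 := by
  simp [PiLp.inner_apply, perp, Fin.sum_univ_two, mul_comm]

lemma inner_K_antisym (a b : EuclideanSpace ℝ (Fin 2)) :
    ⟪a, K a b⟫ = -⟪b, K b a⟫ := by
  have hba : b - a = -(a - b) := by abel
  have hnorm : ‖b - a‖ = ‖a - b‖ := by rw [hba, norm_neg]
  simp only [K, inner_smul_right, hnorm, hba, perp_neg, inner_neg_right]
  have key : ⟪a, perp (a - b)⟫ - ⟪b, perp (a - b)⟫ = 0 := by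
    rw [← inner_sub_left]
    exact inner_perp_self (a - b)
  have : ⟪b, perp (a - b)⟫ = ⟪a, perp (a - b)⟫ := by linarith
  rw [this, norm_neg]; ring

lemma antisym_sum_zero {n : ℕ} (f : Fin n → Fin n → ℝ)
    (hf : ∀ i j, f i j = -f j i) :
    ∑ i, ∑ j ∈ Finset.univ.erase i, f i j = 0 := by
  have h := Finset.sum_comm' (s := (Finset.univ : Finset (Fin n)))
    (t := fun i => Finset.univ.erase i) (t' := Finset.univ)
    (s' := fun j => Finset.univ.erase j)
    (f := f) (by intro i j; simp [ne_comm, eq_comm])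
  have h2 : ∑ i, ∑ j ∈ Finset.univ.erase i, f i j
      = -∑ i, ∑ j ∈ Finset.univ.erase i, f i j := by
    nth_rewrite 1 [h]
    rw [← Finset.sum_neg_distrib]
    refine Finset.sum_congr rfl fun j _ => ?_
    rw [← Finset.sum_neg_distrib]
    exact Finset.sum_congr rfl fun i _ => by rw [hf i j]
  linarith

theorem second_moment_conserved (n : ℕ) (m : Fin n → ℝ) (hm : ∀ i, m i ≠ 0)
    (x : Fin n → ℝ → EuclideanSpace ℝ (Fin 2)) (I : Set ℝ) (hI : I.OrdConnected)
    (hsep : ∀ t ∈ I, ∀ i j, i ≠ j → x i t ≠ x j t)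
    (hode : ∀ t ∈ I, ∀ i, HasDerivWithinAt (x i)
      (∑ j ∈ Finset.univ.erase i, m j • K (x i t) (x j t)) I t) :
    ∀ s ∈ I, ∀ t ∈ I, ∑ i, m i * ‖x i s‖ ^ 2 = ∑ i, m i * ‖x i t‖ ^ 2 := by
  intro s hs t ht
  set F : ℝ → ℝ := fun u => ∑ i, m i * ⟪x i u, x i u⟫ with hF
  have hFeq : ∀ u, F u = ∑ i, m i * ‖x i u‖ ^ 2 := by
    intro u
    exact Finset.sum_congr rfl fun i _ => by rw [real_inner_self_eq_norm_sq]
  have hderiv : ∀ u ∈ I, HasDerivWithinAt F 0 I u := by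
    intro u hu
    have hsum : HasDerivWithinAt F
        (∑ i, m i * (⟪x i u, ∑ j ∈ Finset.univ.erase i, m j • K (x i u) (x j u)⟫
          + ⟪∑ j ∈ Finset.univ.erase i, m j • K (x i u) (x j u), x i u⟫)) I u := by
      exact HasDerivWithinAt.fun_sum (u := Finset.univ) fun i _ =>
        (((hode u hu i).inner ℝ (hode u hu i))).const_mul (m i)
    have hzero : (∑ i, m i * (⟪x i u, ∑ j ∈ Finset.univ.erase i, m j • K (x i u) (x j u)⟫
          + ⟪∑ j ∈ Finset.univ.erase i, m j • K (x i u) (x j u), x i u⟫)) = 0 := by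
      have : ∀ i, m i * (⟪x i u, ∑ j ∈ Finset.univ.erase i, m j • K (x i u) (x j u)⟫
          + ⟪∑ j ∈ Finset.univ.erase i, m j • K (x i u) (x j u), x i u⟫)
          = ∑ j ∈ Finset.univ.erase i, 2 * (m i * m j * ⟪x i u, K (x i u) (x j u)⟫) := by
        intro i
        simp only [inner_sum, sum_inner, real_inner_smul_left, real_inner_smul_right,
          ← Finset.sum_add_distrib, Finset.mul_sum]
        refine Finset.sum_congr rfl fun j _ => ?_
        rw [real_inner_comm (K (x i u) (x j u)) (x i u)]
        ring
      rw [Finset.sum_congr rfl fun i _ => this i]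
      exact antisym_sum_zero (fun i j => 2 * (m i * m j * ⟪x i u, K (x i u) (x j u)⟫))
        (fun i j => by rw [inner_K_antisym (x i u) (x j u)]; ring)
    rwa [hzero] at hsum
  have hconv : Convex ℝ I := hI.convex
  have := Convex.norm_image_sub_le_of_norm_hasDerivWithin_le
    (f := F) (f' := fun _ => (0 : ℝ)) (C := 0) (fun u hu => hderiv u hu)
    (fun u _ => by simp) hconv hs ht
  simp only [zero_mul, norm_le_zero_iff, sub_eq_zero] at this
  rw [← hFeq, ← hFeq, this]
end

section
/- Let m₁ < 0 and m₂,…,mₖ > 0 with −m₁ > m₂ + ⋯ + mₖ, and let x₁,…,xₖ ∈ ℝ². Then there is a constant c > 0 depending only on the masses such that Σ_{1≤i<j≤k} mᵢmⱼ|xᵢ−xⱼ|² ≤ −c · Σ_{i=2}^k |xᵢ − x₁|². In particular Ĩ_S = Σ_{i<j} mᵢmⱼ|xᵢ−xⱼ|² is nonpositive, and vanishes only when all points coincide. -/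
open RealInnerProductSpace

lemma pair_identity {E : Type*} [NormedAddCommGroup E] [InnerProductSpace ℝ E]
    (n : ℕ) (m : Fin n → ℝ) (y : Fin n → E) :
    ∑ p ∈ Finset.univ.filter (fun p : Fin n × Fin n => p.1 < p.2),
      m p.1 * m p.2 * ‖y p.1 - y p.2‖ ^ 2
    = (∑ i, m i) * (∑ i, m i * ‖y i‖ ^ 2) - ‖∑ i, m i • y i‖ ^ 2 := by
  classical
  set f : Fin n × Fin n → ℝ := fun p => m p.1 * m p.2 * ‖y p.1 - y p.2‖ ^ 2 with hf
  have hswap : ∑ p ∈ Finset.univ.filter (fun p : Fin n × Fin n => ¬ p.1 < p.2), f p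
      = ∑ p ∈ Finset.univ.filter (fun p : Fin n × Fin n => p.1 < p.2), f p := by
    have h1 : ∑ p ∈ Finset.univ.filter (fun p : Fin n × Fin n => ¬ p.1 < p.2), f p
        = ∑ p ∈ Finset.univ.filter (fun p : Fin n × Fin n => p.2 < p.1), f p := by
      refine (Finset.sum_subset ?_ ?_).symm
      · intro p hp
        simp only [Finset.mem_filter, Finset.mem_univ, true_and] at hp ⊢
        exact not_lt_of_gt hp
      · intro p hp hp2
        simp only [Finset.mem_filter, Finset.mem_univ, true_and] at hp hp2
        have : p.1 = p.2 := le_antisymm (not_lt.mp hp2) (not_lt.mp hp)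
        simp [hf, this]
    rw [h1]
    refine Finset.sum_equiv (Equiv.prodComm (Fin n) (Fin n)) ?_ ?_
    · intro p; simp
    · intro p hp
      simp only [hf, Equiv.prodComm_apply, Prod.fst_swap, Prod.snd_swap]
      rw [norm_sub_rev]; ring
  have htotal : ∑ p : Fin n × Fin n, f p
      = 2 * ∑ p ∈ Finset.univ.filter (fun p : Fin n × Fin n => p.1 < p.2), f p := by
    rw [← Finset.sum_filter_add_sum_filter_not Finset.univ (fun p : Fin n × Fin n => p.1 < p.2) f,
      hswap]; ring
  have hinner : ‖∑ i, m i • y i‖ ^ 2 = ∑ i, ∑ j, m i * m j * ⟪y i, y j⟫ := by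
    rw [← real_inner_self_eq_norm_sq, sum_inner]
    refine Finset.sum_congr rfl fun i _ => ?_
    rw [inner_sum]
    refine Finset.sum_congr rfl fun j _ => ?_
    rw [real_inner_smul_left, real_inner_smul_right]; ring
  have hexpand : ∑ p : Fin n × Fin n, f p
      = 2 * ((∑ i, m i) * (∑ i, m i * ‖y i‖ ^ 2) - ‖∑ i, m i • y i‖ ^ 2) := by
    rw [Fintype.sum_prod_type, hinner]
    have : ∀ i j : Fin n, f (i, j)
        = m i * m j * ‖y i‖ ^ 2 + m i * m j * ‖y j‖ ^ 2 - 2 * (m i * m j * ⟪y i, y j⟫) := by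
      intro i j
      simp only [hf, @norm_sub_sq_real _ _ _ (y i) (y j)]
      ring
    simp only [this, Finset.sum_add_distrib, Finset.sum_sub_distrib]
    have S1 : ∑ i, ∑ j, m i * m j * ‖y i‖ ^ 2 = (∑ i, m i) * ∑ i, m i * ‖y i‖ ^ 2 := by
      calc ∑ i, ∑ j, m i * m j * ‖y i‖ ^ 2 = ∑ i, (m i * ‖y i‖ ^ 2 * ∑ j, m j) := by
            refine Finset.sum_congr rfl fun i _ => ?_
            rw [Finset.mul_sum]
            exact Finset.sum_congr rfl fun j _ => by ring
        _ = (∑ i, m i * ‖y i‖ ^ 2) * ∑ j, m j := by rw [← Finset.sum_mul]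
        _ = (∑ i, m i) * ∑ i, m i * ‖y i‖ ^ 2 := by ring
    have S2 : ∑ i, ∑ j, m i * m j * ‖y j‖ ^ 2 = (∑ i, m i) * ∑ i, m i * ‖y i‖ ^ 2 := by
      rw [Finset.sum_comm]
      calc ∑ j, ∑ i, m i * m j * ‖y j‖ ^ 2 = ∑ j, (m j * ‖y j‖ ^ 2 * ∑ i, m i) := by
            refine Finset.sum_congr rfl fun j _ => ?_
            rw [Finset.mul_sum]
            exact Finset.sum_congr rfl fun i _ => by ring
        _ = (∑ j, m j * ‖y j‖ ^ 2) * ∑ i, m i := by rw [← Finset.sum_mul]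
        _ = (∑ i, m i) * ∑ i, m i * ‖y i‖ ^ 2 := by ring
    have S3 : ∑ i, ∑ j, 2 * (m i * m j * ⟪y i, y j⟫)
        = 2 * ∑ i, ∑ j, m i * m j * ⟪y i, y j⟫ := by
      rw [Finset.mul_sum]
      exact Finset.sum_congr rfl fun i _ => by rw [Finset.mul_sum]
    rw [S1, S2, S3]
    ring
  linarith [htotal, hexpand]

set_option maxHeartbeats 1000000 in
theorem Itilde_negative_definite (k : ℕ) (m : Fin (k + 1) → ℝ)
    (hm0 : m 0 < 0) (hm : ∀ i, i ≠ 0 → 0 < m i)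
    (hbig : -m 0 > ∑ i ∈ Finset.univ.erase 0, m i) :
    ∃ c > (0 : ℝ), ∀ x : Fin (k + 1) → EuclideanSpace ℝ (Fin 2),
      (∑ p ∈ Finset.univ.filter (fun p : Fin (k + 1) × Fin (k + 1) => p.1 < p.2),
          m p.1 * m p.2 * ‖x p.1 - x p.2‖ ^ 2
        ≤ -c * ∑ i ∈ Finset.univ.erase 0, ‖x i - x 0‖ ^ 2) ∧
      (∑ p ∈ Finset.univ.filter (fun p : Fin (k + 1) × Fin (k + 1) => p.1 < p.2),
          m p.1 * m p.2 * ‖x p.1 - x p.2‖ ^ 2 ≤ 0) ∧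
      ((∑ p ∈ Finset.univ.filter (fun p : Fin (k + 1) × Fin (k + 1) => p.1 < p.2),
          m p.1 * m p.2 * ‖x p.1 - x p.2‖ ^ 2 = 0) → ∀ i j, x i = x j) := by
  classical
  rcases Nat.eq_zero_or_pos k with hk | hk
  · subst hk
    refine ⟨1, one_pos, fun x => ?_⟩
    have hpairs : (Finset.univ.filter (fun p : Fin 1 × Fin 1 => p.1 < p.2)) = ∅ := by decide
    have herase : (Finset.univ.erase (0 : Fin 1)) = ∅ := by decide
    rw [hpairs, herase]
    simp only [Finset.sum_empty, mul_zero, le_refl, neg_mul]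
    refine ⟨by simp, by simp, fun _ i j => ?_⟩
    fin_cases i <;> fin_cases j <;> rfl
  · have hne : (Finset.univ.erase (0 : Fin (k + 1))).Nonempty := by
      refine ⟨⟨1, by omega⟩, Finset.mem_erase.mpr ⟨?_, Finset.mem_univ _⟩⟩
      exact fun h => by simpa using congrArg Fin.val h
    set μ := (Finset.univ.erase (0 : Fin (k + 1))).inf' hne m with hμ
    obtain ⟨i₀, hi₀, hμeq⟩ := Finset.exists_mem_eq_inf' hne m
    have hμpos : 0 < μ := by
      rw [hμ, hμeq]; exact hm i₀ (Finset.mem_erase.mp hi₀).1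
    have hμle : ∀ i ∈ Finset.univ.erase (0 : Fin (k + 1)), μ ≤ m i :=
      fun i hi => Finset.inf'_le m hi
    set S := ∑ i, m i with hS
    have hSsplit : S = m 0 + ∑ i ∈ Finset.univ.erase 0, m i := by
      rw [hS, ← Finset.add_sum_erase _ m (Finset.mem_univ (0 : Fin (k + 1)))]
    have hSneg : S < 0 := by rw [hSsplit]; linarith
    refine ⟨-S * μ, mul_pos (by linarith) hμpos, fun x => ?_⟩
    set y : Fin (k + 1) → EuclideanSpace ℝ (Fin 2) := fun i => x i - x 0 with hy
    have hLHS : ∑ p ∈ Finset.univ.filter (fun p : Fin (k + 1) × Fin (k + 1) => p.1 < p.2),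
        m p.1 * m p.2 * ‖x p.1 - x p.2‖ ^ 2
        = ∑ p ∈ Finset.univ.filter (fun p : Fin (k + 1) × Fin (k + 1) => p.1 < p.2),
        m p.1 * m p.2 * ‖y p.1 - y p.2‖ ^ 2 := by
      refine Finset.sum_congr rfl fun p _ => ?_
      have : y p.1 - y p.2 = x p.1 - x p.2 := by simp [hy]
      rw [this]
    have hy0 : y 0 = 0 := sub_self _
    have hT : ∑ i, m i * ‖y i‖ ^ 2 = ∑ i ∈ Finset.univ.erase 0, m i * ‖y i‖ ^ 2 := by
      rw [← Finset.add_sum_erase _ _ (Finset.mem_univ (0 : Fin (k + 1))), hy0]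
      simp
    have hid := pair_identity (k + 1) m y
    have hTbound : μ * ∑ i ∈ Finset.univ.erase (0 : Fin (k + 1)), ‖y i‖ ^ 2
        ≤ ∑ i ∈ Finset.univ.erase 0, m i * ‖y i‖ ^ 2 := by
      rw [Finset.mul_sum]
      exact Finset.sum_le_sum fun i hi =>
        mul_le_mul_of_nonneg_right (hμle i hi) (by positivity)
    have hsumsq : (0 : ℝ) ≤ ∑ i ∈ Finset.univ.erase (0 : Fin (k + 1)), ‖y i‖ ^ 2 :=
      Finset.sum_nonneg fun i _ => by positivity
    have hmain : ∑ p ∈ Finset.univ.filter (fun p : Fin (k + 1) × Fin (k + 1) => p.1 < p.2),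
        m p.1 * m p.2 * ‖x p.1 - x p.2‖ ^ 2
        ≤ -(-S * μ) * ∑ i ∈ Finset.univ.erase (0 : Fin (k + 1)), ‖y i‖ ^ 2 := by
      rw [hLHS, hid, hT]
      have h1 : S * ∑ i ∈ Finset.univ.erase (0 : Fin (k + 1)), m i * ‖y i‖ ^ 2
          ≤ S * (μ * ∑ i ∈ Finset.univ.erase (0 : Fin (k + 1)), ‖y i‖ ^ 2) :=
        mul_le_mul_of_nonpos_left hTbound (le_of_lt hSneg)
      have h2 : (0 : ℝ) ≤ ‖∑ i, m i • y i‖ ^ 2 := by positivity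
      nlinarith [h1, h2]
    have hsum_eq : ∑ i ∈ Finset.univ.erase (0 : Fin (k + 1)), ‖y i‖ ^ 2
        = ∑ i ∈ Finset.univ.erase (0 : Fin (k + 1)), ‖x i - x 0‖ ^ 2 :=
      Finset.sum_congr rfl fun i _ => by rw [hy]
    have hmain' : ∑ p ∈ Finset.univ.filter (fun p : Fin (k + 1) × Fin (k + 1) => p.1 < p.2),
        m p.1 * m p.2 * ‖x p.1 - x p.2‖ ^ 2
        ≤ -(-S * μ) * ∑ i ∈ Finset.univ.erase (0 : Fin (k + 1)), ‖x i - x 0‖ ^ 2 := by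
      rw [hsum_eq] at hmain; exact hmain
    have hc : (0:ℝ) < -S * μ := mul_pos (by linarith) hμpos
    have hs : (0 : ℝ) ≤ ∑ i ∈ Finset.univ.erase (0 : Fin (k + 1)), ‖x i - x 0‖ ^ 2 :=
      Finset.sum_nonneg fun i _ => by positivity
    have hrhs : -(-S * μ) * ∑ i ∈ Finset.univ.erase (0 : Fin (k + 1)), ‖x i - x 0‖ ^ 2 ≤ 0 := by
      have := mul_nonneg hc.le hs
      linarith
    refine ⟨hmain', le_trans hmain' hrhs, fun h0 => ?_⟩
    have hzero : ∑ i ∈ Finset.univ.erase (0 : Fin (k + 1)), ‖x i - x 0‖ ^ 2 = 0 := by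
      have h1 : (0:ℝ) ≤ -(-S * μ) *
          ∑ i ∈ Finset.univ.erase (0 : Fin (k + 1)), ‖x i - x 0‖ ^ 2 := by
        rw [← h0]; exact hmain'
      have hcs : -S * μ * ∑ i ∈ Finset.univ.erase (0 : Fin (k + 1)), ‖x i - x 0‖ ^ 2 ≤ 0 := by
        linarith
      have hle := nonpos_of_mul_nonpos_right hcs hc
      linarith
    have hall : ∀ i, x i = x 0 := by
      intro i
      by_cases hi : i = 0
      · rw [hi]
      · have hmem : i ∈ Finset.univ.erase (0 : Fin (k + 1)) :=
          Finset.mem_erase.mpr ⟨hi, Finset.mem_univ _⟩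
        have := (Finset.sum_eq_zero_iff_of_nonneg
          (fun j _ => by positivity)).mp hzero i hmem
        have : ‖x i - x 0‖ = 0 := by
          have h := this; nlinarith [norm_nonneg (x i - x 0)]
        rw [norm_eq_zero, sub_eq_zero] at this
        exact this
    intro i j
    rw [hall i, hall j]
end

section
/- Let x₁,…,xₖ ∈ ℝ² with center of mass x_S = (Σⱼ mⱼxⱼ)/(Σⱼ mⱼ) (with m_S = Σⱼ mⱼ ≠ 0), and suppose |xⱼ − x_S| ≤ a for all j. Let y ∈ ℝ² with |y − x_S| ≥ b, where b ≥ 10a·(1 + Σⱼ|mⱼ|/|m_S|). Then |Σⱼ mⱼ(K(y,xⱼ) − K(y,x_S))| ≤ C a²/b³ for a constant C depending only on the masses, where K(x,y) = (x-y)^⊥/|x-y|². (The linear terms in the Taylor expansion of K around y = x_S cancel by definition of the center of mass.) -/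
open scoped RealInnerProductSpace
open Complex Finset

noncomputable def phi : EuclideanSpace ℝ (Fin 2) →ₗ[ℝ] ℂ where
  toFun z := ⟨z 0, z 1⟩
  map_add' a b := by apply Complex.ext <;> simp
  map_smul' r a := by apply Complex.ext <;> simp

@[simp] lemma phi_re (z : EuclideanSpace ℝ (Fin 2)) : (phi z).re = z 0 := rfl
@[simp] lemma phi_im (z : EuclideanSpace ℝ (Fin 2)) : (phi z).im = z 1 := rfl

lemma phi_abs (z : EuclideanSpace ℝ (Fin 2)) : ‖phi z‖ = ‖z‖ := by
  rw [EuclideanSpace.norm_eq, Complex.norm_def, Complex.normSq_apply, Fin.sum_univ_two]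
  simp [Real.norm_eq_abs, sq_abs, sq]

lemma phi_norm (z : EuclideanSpace ℝ (Fin 2)) : ‖phi z‖ = ‖z‖ := phi_abs z

lemma phi_perp (z : EuclideanSpace ℝ (Fin 2)) : phi (perp z) = Complex.I * phi z := by
  apply Complex.ext <;> simp [perp]

lemma phi_K (u v : EuclideanSpace ℝ (Fin 2)) :
    phi (K u v) = Complex.I / (starRingEnd ℂ (phi u) - starRingEnd ℂ (phi v)) := by
  rw [K, map_smul, phi_perp, ← map_sub (starRingEnd ℂ), ← map_sub phi]
  set w := phi (u - v) with hwdef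
  rcases eq_or_ne w 0 with h0 | h0
  · simp [h0]
  · have habs : (‖w‖ : ℝ) = ‖u - v‖ := phi_abs _
    rw [← habs, Complex.real_smul]
    have hconj : (starRingEnd ℂ) w ≠ 0 := by simpa using h0
    rw [eq_div_iff hconj]
    have hmc : w * (starRingEnd ℂ) w = ((‖w‖ ^ 2 : ℝ) : ℂ) := by
      rw [Complex.mul_conj']
      norm_cast
    have ha : ((‖w‖ ^ 2 : ℝ) : ℂ) ≠ 0 := by
      simpa [Complex.ext_iff, pow_eq_zero_iff] using h0
    rw [mul_assoc, mul_assoc, hmc, ← mul_assoc, Complex.ofReal_inv]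
    have habsC : ((‖w‖ : ℝ) : ℂ) ≠ 0 := by
      simpa using h0
    field_simp

lemma conj_phi_sub_norm (u v : EuclideanSpace ℝ (Fin 2)) :
    ‖starRingEnd ℂ (phi u) - starRingEnd ℂ (phi v)‖ = ‖u - v‖ := by
  rw [← map_sub (starRingEnd ℂ), RCLike.norm_conj, ← map_sub phi, phi_norm]

theorem cluster_taylor_bound (k : ℕ) (m : Fin k → ℝ) (hmS : ∑ j, m j ≠ 0) :
    ∃ C > (0 : ℝ), ∀ (a b : ℝ) (x : Fin k → EuclideanSpace ℝ (Fin 2))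
      (y : EuclideanSpace ℝ (Fin 2)),
      (∀ j, ‖x j - (∑ j, m j)⁻¹ • ∑ j, m j • x j‖ ≤ a) →
      b ≤ ‖y - (∑ j, m j)⁻¹ • ∑ j, m j • x j‖ →
      10 * a * (1 + (∑ j, |m j|) / |∑ j, m j|) ≤ b →
      ‖∑ j, m j • (K y (x j) - K y ((∑ j, m j)⁻¹ • ∑ j, m j • x j))‖
        ≤ C * a ^ 2 / b ^ 3 := by
  refine ⟨2 * (∑ j, |m j|) + 1, by positivity, ?_⟩
  intro a b x y hx hby hab
  set mS : ℝ := ∑ j, m j with hmSdef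
  set xS : EuclideanSpace ℝ (Fin 2) := mS⁻¹ • ∑ j, m j • x j with hxSdef
  have hk : 0 < k := by
    rcases Nat.eq_zero_or_pos k with h | h
    · exfalso; apply hmS; subst h
      rw [hmSdef, Finset.univ_eq_empty, Finset.sum_empty]
    · exact h
  have ha0 : 0 ≤ a := le_trans (norm_nonneg _) (hx ⟨0, hk⟩)
  -- ratio ≥ 1
  have habs_le : |mS| ≤ ∑ j, |m j| := Finset.abs_sum_le_sum_abs _ _
  have hmabs : 0 < |mS| := abs_pos.mpr hmS
  have hratio : (1 : ℝ) ≤ (∑ j, |m j|) / |mS| := (one_le_div hmabs).mpr habs_le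
  have hb20 : 20 * a ≤ b := by nlinarith
  rcases eq_or_lt_of_le ha0 with ha | ha
  · -- a = 0
    have hxj : ∀ j, x j = xS := by
      intro j
      have := hx j
      rw [← ha] at this
      have h0 : ‖x j - xS‖ = 0 := le_antisymm this (norm_nonneg _)
      rw [norm_eq_zero, sub_eq_zero] at h0
      exact h0
    have : ∀ j, m j • (K y (x j) - K y xS) = 0 := by
      intro j; rw [hxj j]; simp
    rw [Finset.sum_congr rfl (fun j _ => this j)]
    simp [← ha]
  · -- a > 0
    have hb : 0 < b := by nlinarith
    have hba : a ≤ b / 2 := by nlinarith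
    set B : ℂ := starRingEnd ℂ (phi y) with hBdef
    set p : Fin k → ℂ := fun j => starRingEnd ℂ (phi (x j)) with hpdef
    set pS : ℂ := starRingEnd ℂ (phi xS) with hpSdef
    have hd2norm : ‖B - pS‖ = ‖y - xS‖ := conj_phi_sub_norm y xS
    have hd2 : b ≤ ‖B - pS‖ := by rw [hd2norm]; exact hby
    have hd2ne : B - pS ≠ 0 := by
      intro h; rw [h, norm_zero] at hd2; linarith
    have hu_norm : ∀ j, ‖p j - pS‖ = ‖x j - xS‖ := fun j => conj_phi_sub_norm (x j) xS
    have hu_le : ∀ j, ‖p j - pS‖ ≤ a := fun j => (hu_norm j).le.trans' (le_of_eq rfl) |>.trans (hx j)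
    have hd1 : ∀ j, b / 2 ≤ ‖B - p j‖ := by
      intro j
      have h1 : ‖B - p j‖ = ‖y - x j‖ := conj_phi_sub_norm y (x j)
      have h2 : ‖y - xS‖ - ‖x j - xS‖ ≤ ‖y - x j‖ := by
        have h3 := norm_sub_norm_le (y - xS) (x j - xS)
        have heq : (y - xS) - (x j - xS) = y - x j := by abel
        rw [heq] at h3
        exact h3
      have := hx j
      rw [h1]; linarith [hby]
    have hd1ne : ∀ j, B - p j ≠ 0 := by
      intro j h
      have := hd1 j; rw [h, norm_zero] at this; linarith
    -- center of mass cancellation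
    have hmSC : ((mS : ℝ) : ℂ) ≠ 0 := by exact_mod_cast hmS
    have hpS_val : pS = ((mS⁻¹ : ℝ) : ℂ) * ∑ j, (m j : ℂ) * p j := by
      rw [hpSdef, hxSdef, map_smul, Complex.real_smul, map_mul, Complex.conj_ofReal, map_sum,
        map_sum]
      congr 1
      apply Finset.sum_congr rfl
      intro j _
      rw [map_smul, Complex.real_smul, map_mul, Complex.conj_ofReal]
    have hpS_eq : (mS : ℂ) * pS = ∑ j, (m j : ℂ) * p j := by
      rw [hpS_val, ← mul_assoc]
      push_cast
      rw [mul_inv_cancel₀ hmSC, one_mul]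
    have hcancel : ∑ j, (m j : ℂ) * (p j - pS) = 0 := by
      have h1 : ∑ j, (m j : ℂ) * (p j - pS) = (∑ j, (m j : ℂ) * p j) - (∑ j, (m j : ℂ)) * pS := by
        rw [Finset.sum_mul, ← Finset.sum_sub_distrib]
        congr 1; ext j; ring
      have h2 : (∑ j, (m j : ℂ)) = (mS : ℂ) := by push_cast [hmSdef]; rfl
      rw [h1, h2, hpS_eq, sub_self]
    -- rewrite LHS
    have hphiLHS : phi (∑ j, m j • (K y (x j) - K y xS)) =
        ∑ j, (m j : ℂ) * (Complex.I / (B - p j) - Complex.I / (B - pS)) := by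
      rw [map_sum]
      congr 1; ext j
      rw [map_smul, map_sub, phi_K, phi_K, Complex.real_smul]
    have hnormLHS : ‖∑ j, m j • (K y (x j) - K y xS)‖ =
        ‖∑ j, (m j : ℂ) * (Complex.I / (B - p j) - Complex.I / (B - pS))‖ := by
      rw [← hphiLHS, phi_norm]
    -- pointwise identity
    have hident : ∀ j, (m j : ℂ) * (Complex.I / (B - p j) - Complex.I / (B - pS)) =
        (Complex.I / (B - pS) ^ 2) * ((m j : ℂ) * (p j - pS)) +
        (m j : ℂ) * (Complex.I * (p j - pS) ^ 2 / ((B - p j) * (B - pS) ^ 2)) := by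
      intro j
      have h1 := hd1ne j
      field_simp
      ring
    have hsum_eq : ∑ j, (m j : ℂ) * (Complex.I / (B - p j) - Complex.I / (B - pS)) =
        ∑ j, (m j : ℂ) * (Complex.I * (p j - pS) ^ 2 / ((B - p j) * (B - pS) ^ 2)) := by
      rw [Finset.sum_congr rfl (fun j _ => hident j), Finset.sum_add_distrib,
        ← Finset.mul_sum, hcancel, mul_zero, zero_add]
    rw [hnormLHS, hsum_eq]
    -- bound
    have hterm : ∀ j, ‖(m j : ℂ) * (Complex.I * (p j - pS) ^ 2 / ((B - p j) * (B - pS) ^ 2))‖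
        ≤ |m j| * (a ^ 2 / ((b / 2) * b ^ 2)) := by
      intro j
      rw [norm_mul, norm_div, norm_mul, norm_mul, Complex.norm_I, one_mul, norm_pow, norm_pow,
        Complex.norm_real, Real.norm_eq_abs]
      gcongr
      · exact hu_le j
      · exact hd1 j
    calc ‖∑ j, (m j : ℂ) * (Complex.I * (p j - pS) ^ 2 / ((B - p j) * (B - pS) ^ 2))‖
        ≤ ∑ j, ‖(m j : ℂ) * (Complex.I * (p j - pS) ^ 2 / ((B - p j) * (B - pS) ^ 2))‖ :=
          norm_sum_le _ _
      _ ≤ ∑ j, |m j| * (a ^ 2 / ((b / 2) * b ^ 2)) :=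
          Finset.sum_le_sum (fun j _ => hterm j)
      _ = (∑ j, |m j|) * (a ^ 2 / ((b / 2) * b ^ 2)) := by rw [← Finset.sum_mul]
      _ = 2 * (∑ j, |m j|) * a ^ 2 / b ^ 3 := by
          field_simp
      _ ≤ (2 * (∑ j, |m j|) + 1) * a ^ 2 / b ^ 3 := by
          gcongr
          linarith
end
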